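/- If there exists a sequence of A-unit vectors {x_n} with lim ‖Tx_n‖_A = ‖T‖_A and lim ⟨Tx_n, Sx_n⟩_A = 0, then for all γ ∈ ℂ, ‖T + γS‖_A² ≥ ‖T‖_A² + |γ|² m_A(S)², where m_A(S) = inf{‖Sx‖_A : ‖x‖_A = 1}. -/

import Mathlib

noncomputable section

open Filter Topology

variable {H : Type*} [NormedAddCommGroup H] [InnerProductSpace ℂ H]

/-- The semi-inner product induced by `A`: `⟨x, y⟩_A = ⟨A x, y⟩`. -/
def innerA (A : H →L[ℂ] H) (x y : H) : ℂ := @inner ℂ _ _ (A x) y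

/-- The seminorm induced by `A`: `‖x‖_A = √⟨A x, x⟩`. -/
def normA (A : H →L[ℂ] H) (x : H) : ℝ := Real.sqrt (innerA A x x).re

section aux
variable [CompleteSpace H] (A : H →L[ℂ] H) (hA : A.IsPositive)
include hA

lemma innerA_symm' (p q : H) : (inner ℂ (A p) q : ℂ) = inner ℂ p (A q) := by
  rw [← ContinuousLinearMap.adjoint_inner_left, hA.isSelfAdjoint.adjoint_eq]

lemma innerA_conj (u v : H) : innerA A v u = starRingEnd ℂ (innerA A u v) := by
  unfold innerA
  rw [innerA_symm' A hA, ← inner_conj_symm]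

omit [CompleteSpace H] hA in
lemma normA_nonneg (x : H) : 0 ≤ normA A x := Real.sqrt_nonneg _

lemma normA_sq (x : H) : normA A x ^ 2 = (innerA A x x).re :=
  Real.sq_sqrt (hA.2 x)

def coreA : PreInnerProductSpace.Core ℂ H where
  inner := innerA A
  conj_inner_symm x y := (innerA_conj A hA y x).symm
  re_inner_nonneg x := hA.2 x
  add_left x y z := by
    show innerA A (x + y) z = innerA A x z + innerA A y z
    unfold innerA; rw [map_add, inner_add_left]
  smul_left x y r := by
    show innerA A (r • x) y = starRingEnd ℂ r * innerA A x y
    unfold innerA; rw [map_smul, inner_smul_left]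

lemma cauchyA (u v : H) : ‖innerA A u v‖ ≤ normA A u * normA A v := by
  have h := @InnerProductSpace.Core.inner_mul_inner_self_le ℂ H _ _ _ (coreA A hA) u v
  have h2 : ‖innerA A u v‖ * ‖innerA A u v‖ ≤ (normA A u * normA A v) * (normA A u * normA A v) := by
    have hc : ‖innerA A v u‖ = ‖innerA A u v‖ := by
      rw [innerA_conj A hA u v, RCLike.norm_conj]
    calc ‖innerA A u v‖ * ‖innerA A u v‖ = ‖innerA A u v‖ * ‖innerA A v u‖ := by rw [hc]
      _ ≤ (innerA A u u).re * (innerA A v v).re := h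
      _ = (normA A u * normA A v) * (normA A u * normA A v) := by
          rw [← normA_sq A hA, ← normA_sq A hA]; ring
  exact (mul_self_le_mul_self_iff (norm_nonneg _)
    (mul_nonneg (normA_nonneg A u) (normA_nonneg A v))).mpr h2

lemma expandA (γ : ℂ) (u v : H) :
    (innerA A (u + γ • v) (u + γ • v)).re
      = (innerA A u u).re + 2 * (γ * innerA A u v).re
        + ‖γ‖ ^ 2 * (innerA A v v).re := by
  have hvu : innerA A v u = starRingEnd ℂ (innerA A u v) := innerA_conj A hA u v
  unfold innerA at *
  rw [map_add, map_smul, inner_add_left, inner_add_right, inner_add_right,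
    inner_smul_left, inner_smul_right, inner_smul_left, inner_smul_right, hvu]
  simp only [Complex.add_re, Complex.mul_re, Complex.conj_re, Complex.conj_im,
    Complex.mul_im, Complex.sq_norm, Complex.normSq_apply]
  ring


end aux

/-- The operator seminorm induced by `A`. -/
def opNormA (A T : H →L[ℂ] H) : ℝ :=
  sSup {r : ℝ | ∃ x : H, normA A x = 1 ∧ r = normA A (T x)}

/-- `T` is `A`-bounded. -/
def ABounded (A T : H →L[ℂ] H) : Prop :=
  ∃ c > 0, ∀ x : H, normA A (T x) ≤ c * normA A x

/-- The `A`-minimum modulus. -/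
def mA (A S : H →L[ℂ] H) : ℝ :=
  sInf {r : ℝ | ∃ x : H, normA A x = 1 ∧ r = normA A (S x)}

theorem stmt7 [CompleteSpace H] (A T S : H →L[ℂ] H) (hA : A.IsPositive)
    (hT : ABounded A T) (hS : ABounded A S)
    (hseq : ∃ x : ℕ → H, (∀ n, normA A (x n) = 1) ∧
      Tendsto (fun n => normA A (T (x n))) atTop (𝓝 (opNormA A T)) ∧
      Tendsto (fun n => innerA A (T (x n)) (S (x n))) atTop (𝓝 0)) :
    ∀ γ : ℂ, opNormA A T ^ 2 + ‖γ‖ ^ 2 * mA A S ^ 2 ≤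
      opNormA A (T + γ • S) ^ 2 := by
  obtain ⟨x, hx1, hxT, hxI⟩ := hseq
  obtain ⟨cT, hcT0, hcT⟩ := hT
  obtain ⟨cS, hcS0, hcS⟩ := hS
  intro γ
  set B := T + γ • S with hB
  -- expansion of normA (B y) ^ 2
  have hBsq : ∀ y : H, normA A (B y) ^ 2 = normA A (T y) ^ 2
      + 2 * (γ * innerA A (T y) (S y)).re + ‖γ‖ ^ 2 * normA A (S y) ^ 2 := by
    intro y
    have hBy : B y = T y + γ • S y := by
      simp [hB, ContinuousLinearMap.add_apply, ContinuousLinearMap.smul_apply]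
    rw [normA_sq A hA, normA_sq A hA, normA_sq A hA, hBy, expandA A hA]
  -- mA facts
  have hmA0 : 0 ≤ mA A S :=
    Real.sInf_nonneg (fun r ⟨y, _, hy2⟩ => hy2 ▸ normA_nonneg A _)
  have hmAle : ∀ n, mA A S ≤ normA A (S (x n)) := fun n =>
    csInf_le ⟨0, fun r ⟨y, _, hy2⟩ => hy2 ▸ normA_nonneg A _⟩ ⟨x n, hx1 n, rfl⟩
  -- upper bound for normA (B y) on the unit sphere
  have hub : ∀ y : H, normA A y = 1 → normA A (B y) ≤ cT + ‖γ‖ * cS := by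
    intro y hy
    have haT : normA A (T y) ≤ cT := by have := hcT y; rwa [hy, mul_one] at this
    have haS : normA A (S y) ≤ cS := by have := hcS y; rwa [hy, mul_one] at this
    have hcross : (γ * innerA A (T y) (S y)).re
        ≤ ‖γ‖ * (normA A (T y) * normA A (S y)) := by
      calc (γ * innerA A (T y) (S y)).re ≤ ‖γ * innerA A (T y) (S y)‖ :=
            Complex.re_le_norm _
        _ = ‖γ‖ * ‖innerA A (T y) (S y)‖ := by
            rw [norm_mul]
        _ ≤ ‖γ‖ * (normA A (T y) * normA A (S y)) :=
            mul_le_mul_of_nonneg_left (cauchyA A hA _ _) (norm_nonneg γ)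
    have h1 : normA A (B y) ^ 2 ≤ (cT + ‖γ‖ * cS) ^ 2 := by
      rw [hBsq y]
      have hab : normA A (T y) * normA A (S y) ≤ cT * cS :=
        mul_le_mul haT haS (normA_nonneg A _) hcT0.le
      have h1 : ‖γ‖ * (normA A (T y) * normA A (S y))
          ≤ ‖γ‖ * (cT * cS) :=
        mul_le_mul_of_nonneg_left hab (norm_nonneg γ)
      have h2 : ‖γ‖ ^ 2 * normA A (S y) ^ 2 ≤ ‖γ‖ ^ 2 * cS ^ 2 := by
        have : normA A (S y) ^ 2 ≤ cS ^ 2 := pow_le_pow_left₀ (normA_nonneg A _) haS 2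
        exact mul_le_mul_of_nonneg_left this (sq_nonneg _)
      have h3 : normA A (T y) ^ 2 ≤ cT ^ 2 := pow_le_pow_left₀ (normA_nonneg A _) haT 2
      nlinarith [hcross]
    have h2 := Real.sqrt_le_sqrt h1
    rwa [Real.sqrt_sq (normA_nonneg A _), Real.sqrt_sq (by positivity)] at h2
  have hBdd : BddAbove {r : ℝ | ∃ y : H, normA A y = 1 ∧ r = normA A (B y)} :=
    ⟨cT + ‖γ‖ * cS, fun r ⟨y, hy1, hy2⟩ => hy2 ▸ hub y hy1⟩
  have hBle : ∀ n, normA A (B (x n)) ≤ opNormA A B := fun n =>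
    le_csSup hBdd ⟨x n, hx1 n, rfl⟩
  -- per-n inequality
  have hper : ∀ n, normA A (T (x n)) ^ 2 + 2 * (γ * innerA A (T (x n)) (S (x n))).re
      + ‖γ‖ ^ 2 * mA A S ^ 2 ≤ opNormA A B ^ 2 := by
    intro n
    have e1 : normA A (T (x n)) ^ 2 + 2 * (γ * innerA A (T (x n)) (S (x n))).re
        + ‖γ‖ ^ 2 * mA A S ^ 2 ≤ normA A (B (x n)) ^ 2 := by
      rw [hBsq (x n)]
      have hm2 : mA A S ^ 2 ≤ normA A (S (x n)) ^ 2 :=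
        pow_le_pow_left₀ hmA0 (hmAle n) 2
      have := mul_le_mul_of_nonneg_left hm2 (sq_nonneg (‖γ‖))
      linarith
    exact e1.trans (pow_le_pow_left₀ (normA_nonneg A _) (hBle n) 2)
  -- pass to the limit
  have h2 : Tendsto (fun n => (γ * innerA A (T (x n)) (S (x n))).re) atTop (𝓝 0) := by
    have hh : Tendsto (fun n => γ * innerA A (T (x n)) (S (x n))) atTop (𝓝 0) := by
      simpa using hxI.const_mul γ
    simpa [Function.comp_def] using (Complex.continuous_re.tendsto 0).comp hh
  have hf : Tendsto (fun n => normA A (T (x n)) ^ 2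
      + 2 * (γ * innerA A (T (x n)) (S (x n))).re + ‖γ‖ ^ 2 * mA A S ^ 2)
      atTop (𝓝 (opNormA A T ^ 2 + 2 * 0 + ‖γ‖ ^ 2 * mA A S ^ 2)) :=
    ((hxT.pow 2).add (h2.const_mul 2)).add tendsto_const_nhds
  have := le_of_tendsto hf (Filter.Eventually.of_forall hper)
  simpa using this
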